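/- Let f = a_0 + a_1 z + ... + a_n z^n ∈ ℤ[z] be a primitive polynomial of degree n with a_0·a_n ≠ 0, and let Δ be a positive integer with Δ ≤ n such that f has no nonconstant factor of degree less than Δ in ℤ[z]. Suppose there exist positive integers m, d, k and a prime p with p ∤ d such that m ≥ h_f + 1, (m − 1 − h_f)^Δ ≥ d, and |f(m)| = p^k · d. Then f is a product of at most min_{0 ≤ i ≤ n} { i + v_p(s_i(m)) } irreducible polynomials in ℤ[z]. In particular, if k = 1, or if p ∤ s_1(m), then f is irreducible in ℤ[z]. -/

import Mathlib

/-- The height `h_f = max_{0 ≤ i ≤ n-1} |a_i|/|a_n|` of a polynomial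
`f = a_0 + a_1 z + ⋯ + a_n z^n` of degree `n`. -/
noncomputable def height (f : Polynomial ℤ) : ℝ :=
  ⨆ i : Fin f.natDegree, (|f.coeff i| : ℝ) / |f.coeff f.natDegree|

/-- `v_p(a)` with values in `ℕ∞`, where `v_p(0) = ∞`. -/
noncomputable def intVal (p : ℕ) (a : ℤ) : ℕ∞ :=
  if a = 0 then ⊤ else (padicValInt p a : ℕ∞)

open Polynomial

lemma coeff_prod_dvd (p : ℤ) (S : Multiset (Polynomial ℤ))
    (h : ∀ g ∈ S, p ∣ g.coeff 0) (i : ℕ) :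
    p ^ (Multiset.card S - i) ∣ S.prod.coeff i := by
  induction S using Multiset.induction generalizing i with
  | empty => simp
  | cons a T ih =>
    have ha : p ∣ a.coeff 0 := h a (Multiset.mem_cons_self a T)
    have hT : ∀ g ∈ T, p ∣ g.coeff 0 := fun g hg => h g (Multiset.mem_cons_of_mem hg)
    rw [Multiset.prod_cons, Polynomial.coeff_mul]
    apply Finset.dvd_sum
    intro x hx
    rw [Finset.HasAntidiagonal.mem_antidiagonal] at hx
    rw [Multiset.card_cons]
    rcases Nat.eq_zero_or_pos x.1 with h1 | h1
    · have hx2 : x.2 = i := by omega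
      have key : p ^ ((Multiset.card T - i) + 1) ∣ a.coeff x.1 * T.prod.coeff x.2 := by
        rw [pow_succ, mul_comm (p ^ _) p, h1, hx2]
        exact mul_dvd_mul ha (ih hT i)
      exact dvd_trans (pow_dvd_pow p (by omega)) key
    · have : p ^ (Multiset.card T - x.2) ∣ T.prod.coeff x.2 := ih hT x.2
      exact dvd_trans (pow_dvd_pow p (by omega)) (Dvd.dvd.mul_left this _)

lemma prod_gt (c : ℝ) (hc : 0 < c) (s : Multiset ℝ) (hs : s ≠ 0)
    (h : ∀ x ∈ s, c < x) : c ^ (Multiset.card s) < s.prod := by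
  induction s using Multiset.induction with
  | empty => exact absurd rfl hs
  | cons a t ih =>
    have hac : c < a := h a (Multiset.mem_cons_self a t)
    have hpos : ∀ x ∈ t, c < x := fun x hx => h x (Multiset.mem_cons_of_mem hx)
    rw [Multiset.prod_cons, Multiset.card_cons, pow_succ, mul_comm (c ^ _) c]
    rcases eq_or_ne t 0 with rfl | ht
    · simpa using hac
    · have hip : c ^ Multiset.card t < t.prod := ih ht hpos
      have : 0 < c ^ Multiset.card t := pow_pos hc _
      nlinarith

lemma height_nonneg (f : Polynomial ℤ) : 0 ≤ height f :=
  Real.iSup_nonneg fun i => by positivity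

lemma coeff_le_height (f : Polynomial ℤ) (i : Fin f.natDegree) :
    (|f.coeff i| : ℝ) / |f.coeff f.natDegree| ≤ height f :=
  le_ciSup (f := fun i : Fin f.natDegree => (|f.coeff i| : ℝ) / |f.coeff f.natDegree|)
    ((Set.finite_range _).bddAbove) i

lemma root_bound (f : Polynomial ℤ) (hf0 : f.coeff 0 ≠ 0) (hn : 0 < f.natDegree)
    (α : ℂ) (hα : (f.map (Int.castRingHom ℂ)).IsRoot α) :
    ‖α‖ < 1 + height f := by
  set n := f.natDegree with hn'
  have hfne : f ≠ 0 := fun h => hf0 (by simp [h])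
  have hAne : f.coeff n ≠ 0 := by
    rw [hn']; exact mt Polynomial.leadingCoeff_eq_zero.mp hfne
  set A : ℝ := ((|f.coeff n| : ℤ) : ℝ) with hA'
  have hA : 0 < A := by
    rw [hA']
    exact_mod_cast abs_pos.mpr hAne
  have hcoeff : ∀ i, i < n → ((|f.coeff i| : ℤ) : ℝ) ≤ height f * A := by
    intro i hi
    have h := coeff_le_height f ⟨i, hi⟩
    rw [div_le_iff₀ hA] at h
    exact_mod_cast h
  have hh0 : 0 < height f := by
    have h1 : (1 : ℝ) ≤ ((|f.coeff 0| : ℤ) : ℝ) := by exact_mod_cast Int.one_le_abs hf0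
    have h2 := hcoeff 0 hn
    nlinarith [h1, h2, hA]
  set x := ‖α‖ with hx'
  rcases le_or_gt x 1 with hx1 | hx1
  · linarith
  have heval : (∑ i ∈ Finset.range (n + 1), (f.coeff i : ℂ) * α ^ i) = 0 := by
    have h := hα
    rw [Polynomial.IsRoot, Polynomial.eval_map, Polynomial.eval₂_eq_sum_range] at h
    simpa using h
  have hsplit : (f.coeff n : ℂ) * α ^ n = -∑ i ∈ Finset.range n, (f.coeff i : ℂ) * α ^ i := by
    rw [Finset.sum_range_succ] at heval
    linear_combination heval
  have hterm : ∀ i : ℕ, ‖(f.coeff i : ℂ) * α ^ i‖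
      = ((|f.coeff i| : ℤ) : ℝ) * x ^ i := by
    intro i
    rw [norm_mul, norm_pow, Complex.norm_intCast, Int.cast_abs]
  have habs : A * x ^ n ≤ height f * A * ∑ i ∈ Finset.range n, x ^ i := by
    have h1 : A * x ^ n = ‖(f.coeff n : ℂ) * α ^ n‖ := (hterm n).symm
    rw [h1, hsplit, norm_neg]
    calc ‖∑ i ∈ Finset.range n, (f.coeff i : ℂ) * α ^ i‖
        ≤ ∑ i ∈ Finset.range n, ‖(f.coeff i : ℂ) * α ^ i‖ :=
          norm_sum_le _ _
      _ ≤ ∑ i ∈ Finset.range n, height f * A * x ^ i := by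
          apply Finset.sum_le_sum
          intro i hi
          rw [hterm i]
          have hxi : (0:ℝ) ≤ x ^ i := pow_nonneg (by positivity) i
          exact mul_le_mul_of_nonneg_right (hcoeff i (Finset.mem_range.mp hi)) hxi
      _ = height f * A * ∑ i ∈ Finset.range n, x ^ i := by rw [Finset.mul_sum]
  have hgeom : (∑ i ∈ Finset.range n, x ^ i) * (x - 1) = x ^ n - 1 := geom_sum_mul x n
  have hxn : 0 < x ^ n := pow_pos (by linarith) n
  have key : A * x ^ n * (x - 1) ≤ height f * A * (x ^ n - 1) := by
    calc A * x ^ n * (x - 1)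
        ≤ (height f * A * ∑ i ∈ Finset.range n, x ^ i) * (x - 1) :=
          mul_le_mul_of_nonneg_right habs (by linarith)
      _ = height f * A * ((∑ i ∈ Finset.range n, x ^ i) * (x - 1)) := by ring
      _ = height f * A * (x ^ n - 1) := by rw [hgeom]
  nlinarith [mul_pos hA hxn, mul_pos hh0 hA]

lemma value_lb (f g : Polynomial ℤ) (hf0 : f.coeff 0 ≠ 0) (hn : 0 < f.natDegree)
    (hgf : g ∣ f) (hg : 0 < g.natDegree) (m : ℕ)
    (hc : 1 ≤ (m : ℝ) - 1 - height f) :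
    ((m : ℝ) - 1 - height f) ^ g.natDegree < (((g.eval (m : ℤ)).natAbs : ℕ) : ℝ) := by
  set c : ℝ := (m : ℝ) - 1 - height f with hc'
  have hcpos : 0 < c := lt_of_lt_of_le one_pos hc
  have hfne : f ≠ 0 := fun h => hf0 (by simp [h])
  have hgne : g ≠ 0 := fun h => hfne (by simpa [h] using hgf)
  set G := g.map (Int.castRingHom ℂ) with hG'
  set F := f.map (Int.castRingHom ℂ) with hF'
  have hinj : Function.Injective (Int.castRingHom ℂ) := fun a b h =>
    Int.cast_injective (α := ℂ) (by simpa using h)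
  have hGne : G ≠ 0 := (Polynomial.map_ne_zero_iff hinj).mpr hgne
  have hFne : F ≠ 0 := (Polynomial.map_ne_zero_iff hinj).mpr hfne
  have hdegG : G.natDegree = g.natDegree := Polynomial.natDegree_map_eq_of_injective hinj g
  have hroots : G.roots.card = G.natDegree :=
    Polynomial.splits_iff_card_roots.mp (IsAlgClosed.splits G)
  have hfact := Polynomial.C_leadingCoeff_mul_prod_multiset_X_sub_C hroots
  have hrootsF : G.roots ≤ F.roots :=
    Polynomial.roots.le_of_dvd hFne (Polynomial.map_dvd _ hgf)
  -- evaluate at m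
  have heval : G.eval ((m : ℤ) : ℂ) = ((g.eval (m : ℤ) : ℤ) : ℂ) := by
    rw [hG', Polynomial.eval_intCast_map]
    simp
  have habs : ‖G.eval ((m : ℤ) : ℂ)‖ =
      ‖G.leadingCoeff‖ *
        (G.roots.map fun a => ‖((m : ℤ) : ℂ) - a‖).prod := by
    conv_lhs => rw [← hfact]
    rw [Polynomial.eval_mul, Polynomial.eval_C, norm_mul]
    congr 1
    rw [Polynomial.eval_multiset_prod, show ∀ s : Multiset ℂ, ‖s.prod‖ = (s.map norm).prod from
      fun s => map_multiset_prod (normHom (α := ℂ)) s, Multiset.map_map, Multiset.map_map]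
    congr 1
    apply Multiset.map_congr rfl
    intro a _
    simp
  have hlead : 1 ≤ ‖G.leadingCoeff‖ := by
    have hlc : G.leadingCoeff = (g.leadingCoeff : ℂ) := by
      rw [hG', Polynomial.leadingCoeff_map_of_injective hinj]
      rfl
    rw [hlc, Complex.norm_intCast, ← Int.cast_abs]
    exact_mod_cast Int.one_le_abs (Polynomial.leadingCoeff_ne_zero.mpr hgne)
  have hprodgt : c ^ g.natDegree <
      (G.roots.map fun a => ‖((m : ℤ) : ℂ) - a‖).prod := by
    have hcard : Multiset.card (G.roots.map fun a => ‖((m : ℤ) : ℂ) - a‖)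
        = g.natDegree := by rw [Multiset.card_map, hroots, hdegG]
    rw [← hcard]
    apply prod_gt c hcpos
    · refine Multiset.card_pos.mp ?_
      rw [hcard]; exact hg
    · intro x hx
      obtain ⟨a, haG, rfl⟩ := Multiset.mem_map.mp hx
      have haF : F.IsRoot a := Polynomial.isRoot_of_mem_roots (Multiset.mem_of_le hrootsF haG)
      have hbound : ‖a‖ < 1 + height f := root_bound f hf0 hn a haF
      have h1 : ‖(m : ℂ)‖ - ‖a‖ ≤ ‖(m : ℂ) - a‖ := by
        have := norm_sub_norm_le ((m : ℂ)) a
        simpa using this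
      have h2 : ‖(m : ℂ)‖ = (m : ℝ) := by
        rw [Complex.norm_natCast]
      push_cast
      push_cast at h1 h2
      rw [hc']
      linarith
  have hfinal : c ^ g.natDegree < ‖G.eval ((m : ℤ) : ℂ)‖ := by
    rw [habs]
    have hprodnn : (0:ℝ) ≤ (G.roots.map fun a => ‖((m : ℤ) : ℂ) - a‖).prod :=
      le_of_lt (lt_trans (pow_pos hcpos _) hprodgt)
    calc c ^ g.natDegree < (G.roots.map fun a => ‖((m : ℤ) : ℂ) - a‖).prod :=
          hprodgt
      _ = 1 * _ := (one_mul _).symm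
      _ ≤ ‖G.leadingCoeff‖ *
          (G.roots.map fun a => ‖((m : ℤ) : ℂ) - a‖).prod :=
          mul_le_mul_of_nonneg_right hlead hprodnn
  rw [heval, Complex.norm_intCast] at hfinal
  rw [Nat.cast_natAbs, Int.cast_abs]
  exact hfinal



/-- Theorem 4: let `f` be primitive of degree `n` with `a_0 a_n ≠ 0`, and let
`Δ ≤ n` be a positive integer such that `f` has no nonconstant factor of degree
less than `Δ` in `ℤ[z]`. If there are positive integers `m, d, k` and a prime
`p ∤ d` with `m ≥ h_f + 1`, `(m - 1 - h_f)^Δ ≥ d` and `|f(m)| = p^k d`, then `f` is a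
product of at most `min_{0 ≤ i ≤ n} {i + v_p(s_i(m))}` irreducible polynomials in
`ℤ[z]` (with `s_i = f^{(i)}/i!` and `v_p(0) = ∞`); in particular, if `k = 1` or
`p ∤ s_1(m)`, then `f` is irreducible. -/
theorem statement3
    (f : Polynomial ℤ) (n : ℕ) (hdeg : f.natDegree = n)
    (ha : f.coeff 0 * f.coeff n ≠ 0) (hprim : f.IsPrimitive)
    (Δ : ℕ) (hΔ0 : 0 < Δ) (hΔn : Δ ≤ n)
    (hΔ : ∀ g : Polynomial ℤ, g ∣ f → 0 < g.natDegree → Δ ≤ g.natDegree)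
    (m d k : ℕ) (hm : 0 < m) (hd : 0 < d) (hk : 0 < k)
    (p : ℕ) (hp : Nat.Prime p) (hpd : ¬ p ∣ d)
    (hm1 : height f + 1 ≤ (m : ℝ))
    (hm2 : (d : ℝ) ≤ ((m : ℝ) - 1 - height f) ^ Δ)
    (hfm : (f.eval (m : ℤ)).natAbs = p ^ k * d) :
    (∃ (u : ℤˣ) (gs : Multiset (Polynomial ℤ)),
      (Multiset.card gs : ℕ∞) ≤
        (Finset.range (n + 1)).inf
          (fun i => (i : ℕ∞) + intVal p ((Polynomial.hasseDeriv i f).eval (m : ℤ))) ∧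
      (∀ g ∈ gs, 0 < g.natDegree ∧ Irreducible g) ∧
      f = Polynomial.C (u : ℤ) * gs.prod) ∧
    ((k = 1 ∨ ¬ ((p : ℤ) ∣ (Polynomial.hasseDeriv 1 f).eval (m : ℤ))) →
      Irreducible f) := by
  haveI : Fact p.Prime := ⟨hp⟩
  have ha0 : f.coeff 0 ≠ 0 := left_ne_zero_of_mul ha
  have hfne : f ≠ 0 := fun h => ha0 (by simp [h])
  have hn1 : 0 < n := lt_of_lt_of_le hΔ0 hΔn
  have hndeg : 0 < f.natDegree := hdeg ▸ hn1
  set c : ℝ := (m : ℝ) - 1 - height f with hc'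
  have hc0 : 0 ≤ c := by rw [hc']; linarith
  have hc1 : 1 ≤ c := by
    by_contra hlt
    push_neg at hlt
    have h1 : c ^ Δ < 1 := pow_lt_one₀ hc0 hlt hΔ0.ne' 
    have h2 : (d : ℝ) < 1 := lt_of_le_of_lt hm2 h1
    have : d = 0 := by exact_mod_cast Nat.lt_one_iff.mp (by exact_mod_cast h2)
    omega
  -- factorization into irreducibles
  obtain ⟨w, hw⟩ := UniqueFactorizationMonoid.factors_prod hfne
  set gs := UniqueFactorizationMonoid.factors f with hgs
  obtain ⟨r, hr, hrw⟩ := Polynomial.isUnit_iff.mp w.isUnit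
  have hfeq : f = Polynomial.C ((hr.unit : ℤˣ) : ℤ) * gs.prod := by
    rw [IsUnit.unit_spec, hrw, hw.symm]
    ring
  have hirrs : ∀ g ∈ gs, Irreducible g := fun g hg =>
    UniqueFactorizationMonoid.irreducible_of_factor g hg
  have hdvd : ∀ g ∈ gs, g ∣ f := fun g hg =>
    UniqueFactorizationMonoid.dvd_of_mem_factors hg
  have hdegs : ∀ g ∈ gs, 0 < g.natDegree := by
    intro g hg
    rcases Nat.eq_zero_or_pos g.natDegree with h0 | h
    · exfalso
      have hgC : g = Polynomial.C (g.coeff 0) := Polynomial.eq_C_of_natDegree_eq_zero h0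
      have : Polynomial.C (g.coeff 0) ∣ f := hgC ▸ hdvd g hg
      have hu := hprim (g.coeff 0) this
      exact (hirrs g hg).not_isUnit (hgC ▸ (Polynomial.isUnit_C.mpr hu))
    · exact h
  -- p divides g(m) for each factor
  have hpm : ∀ g ∈ gs, (p : ℤ) ∣ g.eval (m : ℤ) := by
    intro g hg
    have hΔg : Δ ≤ g.natDegree := hΔ g (hdvd g hg) (hdegs g hg)
    have hlb := value_lb f g ha0 hndeg (hdvd g hg) (hdegs g hg) m (hc' ▸ hc1)
    have hdlt : d < (g.eval (m : ℤ)).natAbs := by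
      have h2 : c ^ Δ ≤ c ^ g.natDegree := pow_le_pow_right₀ hc1 hΔg
      have h3 : (d : ℝ) < (((g.eval (m : ℤ)).natAbs : ℕ) : ℝ) :=
        lt_of_le_of_lt (le_trans hm2 h2) hlb
      exact_mod_cast h3
    have hdvdval : (g.eval (m : ℤ)).natAbs ∣ p ^ k * d := by
      rw [← hfm]
      exact Int.natAbs_dvd_natAbs.mpr (Polynomial.eval_dvd (hdvd g hg))
    by_contra hpg
    have hpnat : ¬ p ∣ (g.eval (m : ℤ)).natAbs := by
      intro h
      apply hpg
      have h2 : ((p:ℤ)).natAbs ∣ (g.eval (m:ℤ)).natAbs := by simpa using h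
      exact Int.natAbs_dvd_natAbs.mp h2
    have hcop : Nat.Coprime (g.eval (m : ℤ)).natAbs (p ^ k) :=
      Nat.Coprime.pow_right k ((hp.coprime_iff_not_dvd.mpr hpnat).symm)
    have hdd : (g.eval (m : ℤ)).natAbs ∣ d := hcop.dvd_of_dvd_mul_left hdvdval
    have := Nat.le_of_dvd hd hdd
    omega
  set N := Multiset.card gs with hN'
  -- divisibility of Taylor coefficients
  have hcoeffdvd : ∀ i, (p : ℤ) ^ (N - i) ∣ (Polynomial.hasseDeriv i f).eval (m : ℤ) := by
    intro i
    rw [← Polynomial.taylor_coeff]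
    have htay : Polynomial.taylor (m : ℤ) f =
        Polynomial.C ((hr.unit : ℤˣ) : ℤ) *
          (gs.map fun g => Polynomial.taylor (m : ℤ) g).prod := by
      conv_lhs => rw [hfeq]
      rw [Polynomial.taylor_apply, Polynomial.mul_comp, Polynomial.C_comp,
        Polynomial.multiset_prod_comp]
      rfl
    rw [htay, Polynomial.coeff_C_mul]
    apply Dvd.dvd.mul_left
    have hcard : Multiset.card (gs.map fun g => Polynomial.taylor (m : ℤ) g) = N :=
      Multiset.card_map _ _
    rw [← hcard]
    apply coeff_prod_dvd
    intro G hG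
    obtain ⟨g, hg, rfl⟩ := Multiset.mem_map.mp hG
    rw [Polynomial.taylor_coeff_zero]
    exact hpm g hg
  have hterm : ∀ i : ℕ, (N : ℕ∞) ≤ (i : ℕ∞) + intVal p ((Polynomial.hasseDeriv i f).eval (m : ℤ)) := by
    intro i
    by_cases hsi : (Polynomial.hasseDeriv i f).eval (m : ℤ) = 0
    · simp [intVal, hsi]
    · rw [intVal, if_neg hsi]
      have hle : N - i ≤ padicValInt p ((Polynomial.hasseDeriv i f).eval (m : ℤ)) :=
        ((padicValInt_dvd_iff (N - i) _).mp (hcoeffdvd i)).resolve_left hsi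
      rw [← Nat.cast_add]
      exact_mod_cast (by omega : N ≤ i + padicValInt p ((Polynomial.hasseDeriv i f).eval (m : ℤ)))
  have hbound : (N : ℕ∞) ≤ (Finset.range (n + 1)).inf
      (fun i => (i : ℕ∞) + intVal p ((Polynomial.hasseDeriv i f).eval (m : ℤ))) :=
    Finset.le_inf fun i _ => hterm i
  refine ⟨⟨hr.unit, gs, hbound, fun g hg => ⟨hdegs g hg, hirrs g hg⟩, hfeq⟩, ?_⟩
  intro hcase
  have hNle : N ≤ 1 := by
    rcases hcase with rfl | hps
    · -- k = 1
      have hfm0 : f.eval (m : ℤ) ≠ 0 := by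
        intro h
        rw [h] at hfm
        simp only [Int.natAbs_zero] at hfm
        have hpk : 0 < p ^ 1 := pow_pos hp.pos 1
        have : 0 < p ^ 1 * d := Nat.mul_pos hpk hd
        omega
      have hval : intVal p ((Polynomial.hasseDeriv 0 f).eval (m : ℤ)) = (1 : ℕ) := by
        have h0 : (Polynomial.hasseDeriv 0 f) = f := by
          simp [Polynomial.hasseDeriv_zero]
        rw [h0, intVal, if_neg hfm0]
        congr 1
        rw [padicValInt, hfm]
        rw [padicValNat.mul (pow_ne_zero 1 hp.ne_zero) (by omega)]
        rw [pow_one, padicValNat.self hp.one_lt, padicValNat.eq_zero_of_not_dvd hpd]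
      have h0mem : (0:ℕ) ∈ Finset.range (n + 1) := by simp
      have h1 := le_trans hbound (Finset.inf_le h0mem)
      rw [hval] at h1
      simp only [Nat.cast_zero, zero_add] at h1
      exact_mod_cast h1
    · -- p ∤ s₁(m)
      have hs1 : (Polynomial.hasseDeriv 1 f).eval (m : ℤ) ≠ 0 := by
        intro h
        exact hps (h ▸ dvd_zero _)
      have hval : intVal p ((Polynomial.hasseDeriv 1 f).eval (m : ℤ)) = (0 : ℕ) := by
        rw [intVal, if_neg hs1]
        congr 1
        rw [padicValInt]
        apply padicValNat.eq_zero_of_not_dvd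
        intro h
        exact hps (Int.natAbs_dvd_natAbs.mp (by simpa using h))
      have h1mem : (1:ℕ) ∈ Finset.range (n + 1) := by
        simp
        omega
      have h1 := le_trans hbound (Finset.inf_le h1mem)
      rw [hval] at h1
      simp only [Nat.cast_one, Nat.cast_zero, add_zero] at h1
      exact_mod_cast h1
  have hN1 : N = 1 := by
    rcases Nat.eq_zero_or_pos N with h0 | h
    · exfalso
      have : gs = 0 := Multiset.card_eq_zero.mp h0
      rw [this] at hfeq
      simp only [Multiset.prod_zero, mul_one] at hfeq
      have h2 := congrArg Polynomial.natDegree hfeq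
      rw [Polynomial.natDegree_C] at h2
      omega
    · omega
  obtain ⟨g, hgseq⟩ := Multiset.card_eq_one.mp hN1
  have hgirr : Irreducible g := hirrs g (hgseq ▸ Multiset.mem_singleton_self g)
  have hfg : f = Polynomial.C ((hr.unit : ℤˣ) : ℤ) * g := by
    rw [hfeq, hgseq]
    simp
  have hCu : IsUnit (Polynomial.C ((hr.unit : ℤˣ) : ℤ)) :=
    Polynomial.isUnit_C.mpr (hr.unit.isUnit)
  have hassoc : Associated g f := by
    rw [hfg]
    exact (associated_unit_mul_left _ _ hCu).symm
  exact hassoc.irreducible hgirr
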